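/- arXiv:0809.1411 — 4 statements merged into one kernel-verified Lean document; each statement's English description precedes it below -/
import Mathlib

section
/- For every integer N ≥ 2, the number of finite sequences (α₁,…,α_l) of integers with l ≥ 1 and α_i ≥ 2 for all i such that the determinant of T(α₁,…,α_l) equals N is exactly Euler's totient function Φ(N), i.e. the number of invertible elements of the ring ℤ/Nℤ. -/
/-- The symmetric tridiagonal matrix with diagonal entries `α 0, …, α (n-1)` and
all sub- and superdiagonal entries equal to `1`. -/
def Tmat {R : Type*} [CommRing R] {n : ℕ} (α : Fin n → R) : Matrix (Fin n) (Fin n) R :=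
  Matrix.of fun i j =>
    if (i : ℕ) = (j : ℕ) then α i
    else if (i : ℕ) + 1 = (j : ℕ) ∨ (j : ℕ) + 1 = (i : ℕ) then 1 else 0

/-- The determinant of the tridiagonal matrix associated to a finite sequence. -/
def detT {R : Type*} [CommRing R] (L : List R) : R := (Tmat L.get).det

lemma Tmat_rec {R : Type*} [CommRing R] {n : ℕ} (α : Fin (n+2) → R) :
    (Tmat α).det = α 0 * (Tmat (α ∘ Fin.succ)).det
      - (Tmat (fun i => α i.succ.succ)).det := by
  have sA1 : ((0:Fin (n+1)).succ).succAbove (0 : Fin (n+1)) = 0 := by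
    ext; simp [Fin.succAbove]
  have sA2 : ∀ j : Fin n, ((0:Fin (n+1)).succ).succAbove j.succ = j.succ.succ := by
    intro j; ext; simp [Fin.succAbove, Fin.lt_def]
  rw [Matrix.det_succ_row_zero, Fin.sum_univ_succ, Fin.sum_univ_succ]
  have h0 : ∀ j : Fin n, Tmat α 0 j.succ.succ = 0 := by
    intro j; simp [Tmat]
  have hm1 : (Tmat α).submatrix Fin.succ ((0 : Fin (n+2)).succAbove)
      = Tmat (α ∘ Fin.succ) := by
    ext i j
    simp [Tmat, Fin.succAbove_zero, Matrix.submatrix]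
  have hm2 : ((Tmat α).submatrix Fin.succ (((0:Fin (n+1)).succ).succAbove)).det
      = (Tmat (fun i => α i.succ.succ)).det := by
    rw [Matrix.det_succ_column_zero, Fin.sum_univ_succ]
    have hc : ∀ i : Fin n,
        (Tmat α).submatrix Fin.succ (((0:Fin (n+1)).succ).succAbove) i.succ 0 = 0 := by
      intro i
      simp [Matrix.submatrix_apply, sA1, Tmat]
    have he : ((Tmat α).submatrix Fin.succ (((0:Fin (n+1)).succ).succAbove)).submatrix
        ((0 : Fin (n+1)).succAbove) Fin.succ = Tmat (fun i => α i.succ.succ) := by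
      ext i j
      simp [Matrix.submatrix_apply, Fin.succAbove_zero, sA2, Tmat]
    have hv : (Tmat α).submatrix Fin.succ (((0:Fin (n+1)).succ).succAbove) 0 0 = 1 := by
      simp [Matrix.submatrix_apply, sA1, Tmat]
    rw [Finset.sum_eq_zero (fun i _ => by rw [hc i]; ring)]
    rw [hv, he]
    simp
  rw [hm1, hm2]
  have ha : Tmat α 0 0 = α 0 := by simp [Tmat]
  have hb : Tmat α 0 (0:Fin (n+1)).succ = 1 := by simp [Tmat]
  rw [Finset.sum_eq_zero (fun j _ => by rw [h0 j]; ring), ha, hb]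
  simp
  ring

lemma detT_nil {R : Type*} [CommRing R] : detT ([] : List R) = 1 := by
  simp [detT, Matrix.det_fin_zero]

lemma detT_single {R : Type*} [CommRing R] (a : R) : detT [a] = a := by
  simp [detT, Matrix.det_fin_one, Tmat]

lemma detT_cons_cons {R : Type*} [CommRing R] (a b : R) (L : List R) :
    detT (a :: b :: L) = a * detT (b :: L) - detT L := by
  have h1 : (a :: b :: L).get ∘ Fin.succ = (b :: L).get := rfl
  have h2 : (fun i : Fin L.length => (a :: b :: L).get i.succ.succ) = L.get := rfl
  rw [detT, Tmat_rec, h1, h2]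
  rfl

lemma key : ∀ L : List ℤ, L ≠ [] → (∀ x ∈ L, 2 ≤ x) →
    1 ≤ detT L.tail ∧ detT L.tail < detT L ∧ IsCoprime (detT L) (detT L.tail) := by
  intro L
  induction L with
  | nil => simp
  | cons a M ih =>
    intro _ hall
    have ha : 2 ≤ a := hall a (by simp)
    match M with
    | [] =>
      refine ⟨by simp [detT_nil], by simp [detT_nil, detT_single]; omega, ?_⟩
      simp [detT_nil, isCoprime_one_right]
    | b :: M' =>
      obtain ⟨h1, h2, h3⟩ := ih (by simp) (fun x hx => hall x (by simp [hx]))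
      simp only [List.tail_cons] at h1 h2 h3 ⊢
      have hrec := detT_cons_cons a b M'
      set q := detT (b :: M') with hq
      set q' := detT M' with hq'
      have hub : 2 * q ≤ a * q := mul_le_mul_of_nonneg_right ha (by omega)
      refine ⟨by omega, by rw [hrec]; omega, ?_⟩
      rw [hrec]
      have : IsCoprime (-q' + q * a) q := (h3.symm.neg_left).add_mul_left_left a
      have e : -q' + q * a = a * q - q' := by ring
      rw [e] at this
      exact this

lemma inj : ∀ n : ℕ, ∀ L1 L2 : List ℤ, L1.length ≤ n → L1 ≠ [] → L2 ≠ [] →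
    (∀ x ∈ L1, 2 ≤ x) → (∀ x ∈ L2, 2 ≤ x) →
    detT L1 = detT L2 → detT L1.tail = detT L2.tail → L1 = L2 := by
  intro n
  induction n with
  | zero =>
    intro L1 L2 hlen hne1
    exact absurd (List.length_eq_zero_iff.mp (Nat.le_zero.mp hlen)) hne1
  | succ n ih =>
    intro L1 L2 hlen hne1 hne2 hall1 hall2 hd ht
    match L1, L2 with
    | [a], [c] => rw [detT_single, detT_single] at hd; rw [hd]
    | [a], c :: d :: M =>
      exfalso
      obtain ⟨h1, h2, _⟩ := key (d :: M) (by simp) (fun x hx => hall2 x (by simp [hx]))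
      simp only [List.tail_cons, detT_nil] at ht
      omega
    | a :: b :: M, [c] =>
      exfalso
      obtain ⟨h1, h2, _⟩ := key (b :: M) (by simp) (fun x hx => hall1 x (by simp [hx]))
      simp only [List.tail_cons, detT_nil] at ht
      omega
    | a :: b :: M1, c :: d :: M2 =>
      simp only [List.tail_cons] at ht
      obtain ⟨h1, h2, _⟩ := key (b :: M1) (by simp) (fun x hx => hall1 x (by simp [hx]))
      obtain ⟨h1', h2', _⟩ := key (d :: M2) (by simp) (fun x hx => hall2 x (by simp [hx]))
      simp only [List.tail_cons] at h1 h2 h1' h2'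
      rw [detT_cons_cons, detT_cons_cons, ← ht] at hd
      -- hd : a * detT (b::M1) - detT M1 = c * detT (b::M1) - detT M2
      set Q := detT (b :: M1) with hQ
      have h2'' : detT M2 < Q := by rw [ht]; exact h2'
      have h5 : (a - c) * Q = detT M1 - detT M2 := by linear_combination hd
      have hac : a = c := by
        rcases lt_trichotomy a c with h | h | h
        · nlinarith [mul_le_mul_of_nonneg_right (show a - c ≤ -1 by omega) (show (0:ℤ) ≤ Q by omega)]
        · exact h
        · nlinarith [mul_le_mul_of_nonneg_right (show 1 ≤ a - c by omega) (show (0:ℤ) ≤ Q by omega)]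
      have hq' : detT M1 = detT M2 := by
        rw [hac] at h5; simp at h5; linarith
      have : b :: M1 = d :: M2 := by
        apply ih (b :: M1) (d :: M2) (by simp at hlen ⊢; omega) (by simp) (by simp)
          (fun x hx => hall1 x (by simp [hx])) (fun x hx => hall2 x (by simp [hx])) ht
        simpa using hq'
      rw [hac, this]

lemma surj : ∀ k : ℕ, ∀ p q : ℤ, q.toNat ≤ k → 1 ≤ q → q < p → IsCoprime p q →
    ∃ L : List ℤ, L ≠ [] ∧ (∀ x ∈ L, 2 ≤ x) ∧ detT L = p ∧ detT L.tail = q := by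
  intro k
  induction k with
  | zero => intro p q hk h1; omega
  | succ k ih =>
    intro p q hk h1 h2 hcop
    rcases eq_or_lt_of_le h1 with h | h
    · refine ⟨[p], by simp, by simpa using by omega, by rw [detT_single], by simp [detT_nil]; omega⟩
    · -- q ≥ 2
      have hq0 : 0 < q := by omega
      have hr0 : 0 ≤ p % q := Int.emod_nonneg p (by omega)
      have hrq : p % q < q := Int.emod_lt_of_pos p hq0
      have hrne : p % q ≠ 0 := by
        intro h0
        have hdvd : q ∣ p := Int.dvd_of_emod_eq_zero h0
        obtain ⟨u, v, huv⟩ := hcop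
        have : q ∣ 1 := by
          have : q ∣ u * p + v * q := by
            exact dvd_add (Dvd.dvd.mul_left hdvd u) (Dvd.dvd.mul_left dvd_rfl v)
          rwa [huv] at this
        have := Int.le_of_dvd one_pos this
        omega
      set a := p / q + 1 with ha
      set q' := a * q - p with hq'
      have hpq : q * (p / q) + p % q = p := Int.mul_ediv_add_emod p q
      have hq'eq : q' = q - p % q := by rw [hq', ha]; linear_combination hpq
      have hdiv1 : 1 ≤ p / q := by
        rw [Int.le_ediv_iff_mul_le hq0]; omega
      have ha2 : 2 ≤ a := by omega
      have h1' : 1 ≤ q' := by omega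
      have h2' : q' < q := by omega
      have hcop' : IsCoprime q q' := by
        have : IsCoprime q (-p + q * a) := (hcop.symm.neg_right).add_mul_left_right a
        have e : -p + q * a = q' := by rw [hq']; ring
        rwa [e] at this
      obtain ⟨M, hMne, hMall, hMd, hMt⟩ := ih q q' (by omega) h1' h2' hcop'
      match M, hMne with
      | b :: M', _ =>
        refine ⟨a :: b :: M', by simp, ?_, ?_, by simpa using hMd⟩
        · intro x hx
          rcases List.mem_cons.mp hx with h | h
          · omega
          · exact hMall x h
        · rw [detT_cons_cons, hMd]
          simp only [List.tail_cons] at hMt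
          rw [hMt]; rw [hq']; ring

theorem stmt0 (N : ℕ) (hN : 2 ≤ N) :
    {L : List ℤ | L ≠ [] ∧ (∀ x ∈ L, 2 ≤ x) ∧ detT L = (N : ℤ)}.ncard = Nat.totient N := by
  set S := {L : List ℤ | L ≠ [] ∧ (∀ x ∈ L, 2 ≤ x) ∧ detT L = (N : ℤ)} with hS
  set T := {m : ℕ | m < N ∧ Nat.Coprime N m} with hT
  have hbij : Set.BijOn (fun L => (detT L.tail).toNat) S T := by
    refine ⟨?_, ?_, ?_⟩
    · rintro L ⟨hne, hall, hdet⟩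
      obtain ⟨h1, h2, h3⟩ := key L hne hall
      rw [hdet] at h2 h3
      refine ⟨show (detT L.tail).toNat < N by omega, ?_⟩
      have he : ((detT L.tail).toNat : ℤ) = detT L.tail := Int.toNat_of_nonneg (by omega)
      show N.Coprime (detT L.tail).toNat
      rw [← Nat.isCoprime_iff_coprime, he]
      exact h3
    · rintro L1 ⟨hne1, hall1, hdet1⟩ L2 ⟨hne2, hall2, hdet2⟩ heq
      simp only at heq
      obtain ⟨h1, _, _⟩ := key L1 hne1 hall1
      obtain ⟨h1', _, _⟩ := key L2 hne2 hall2
      have : detT L1.tail = detT L2.tail := by omega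
      exact inj L1.length L1 L2 le_rfl hne1 hne2 hall1 hall2 (by rw [hdet1, hdet2]) this
    · rintro m ⟨hm, hcop⟩
      have hm1 : 1 ≤ m := by
        rcases Nat.eq_zero_or_pos m with h | h
        · rw [h, Nat.coprime_zero_right] at hcop; omega
        · omega
      obtain ⟨L, hne, hall, hd, ht⟩ := surj m (N : ℤ) (m : ℤ) (by simp) (by exact_mod_cast hm1)
        (by exact_mod_cast hm) (Nat.isCoprime_iff_coprime.mpr hcop)
      exact ⟨L, ⟨hne, hall, hd⟩, by simp [ht]⟩
  rw [← Set.ncard_image_of_injOn hbij.injOn, hbij.image_eq]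
  have : T = ↑((Finset.range N).filter N.Coprime) := by
    ext m; simp [hT, and_comm]
  rw [this, Set.ncard_coe_finset, Nat.totient]
end

section
/- Let α₁,…,α_l be a sequence of l ≥ 1 real numbers with α_i ≥ 2 for all i, and write M(α₁)M(α₂)⋯M(α_l) as the 2×2 real matrix with rows (−a,−b) and (c,d). Then 0 ≤ a < min(b,c), max(b,c) < d, and c − a ≤ d − b. -/
/-- The matrix `M(α) = !![0, -1; 1, α]`. -/
def Mmat {R : Type*} [CommRing R] (a : R) : Matrix (Fin 2) (Fin 2) R := !![0, -1; 1, a]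

lemma aux4 (L : List ℝ) (hL : L ≠ []) (h2 : ∀ x ∈ L, 2 ≤ x) :
    0 ≤ -((L.map Mmat).prod 0 0) ∧
    -((L.map Mmat).prod 0 0) < -((L.map Mmat).prod 0 1) ∧
    -((L.map Mmat).prod 0 0) < (L.map Mmat).prod 1 0 ∧
    -((L.map Mmat).prod 0 1) < (L.map Mmat).prod 1 1 ∧
    (L.map Mmat).prod 1 0 < (L.map Mmat).prod 1 1 ∧
    (L.map Mmat).prod 1 0 + (L.map Mmat).prod 0 0 ≤
      (L.map Mmat).prod 1 1 + (L.map Mmat).prod 0 1 := by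
  induction L with
  | nil => exact absurd rfl hL
  | cons x rest ih =>
    have hx : 2 ≤ x := h2 x (by simp)
    rcases eq_or_ne rest [] with hr | hr
    · subst hr
      simp [Mmat, Matrix.cons_val_zero, Matrix.cons_val_one]
      norm_num
      constructor <;> linarith
    · have h2' : ∀ y ∈ rest, 2 ≤ y := fun y hy => h2 y (by simp [hy])
      obtain ⟨i1, i2, i3, i4, i5, i6⟩ := ih hr h2'
      set P := (rest.map Mmat).prod with hP
      have hmul : ((x :: rest).map Mmat).prod = Mmat x * P := by
        simp [hP]
      have e00 : ((x :: rest).map Mmat).prod 0 0 = -(P 1 0) := by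
        rw [hmul]; simp [Mmat, Matrix.mul_apply, Fin.sum_univ_two]
      have e01 : ((x :: rest).map Mmat).prod 0 1 = -(P 1 1) := by
        rw [hmul]; simp [Mmat, Matrix.mul_apply, Fin.sum_univ_two]
      have e10 : ((x :: rest).map Mmat).prod 1 0 = P 0 0 + x * P 1 0 := by
        rw [hmul]; simp [Mmat, Matrix.mul_apply, Fin.sum_univ_two]
      have e11 : ((x :: rest).map Mmat).prod 1 1 = P 0 1 + x * P 1 1 := by
        rw [hmul]; simp [Mmat, Matrix.mul_apply, Fin.sum_univ_two]
      rw [e00, e01, e10, e11]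
      have hc : 0 < P 1 0 := by linarith
      have hd : 0 < P 1 1 := by linarith
      have hdc : P 1 0 ≤ P 1 1 := le_of_lt i5
      refine ⟨by linarith, by linarith, ?_, ?_, ?_, ?_⟩
      · nlinarith
      · nlinarith
      · nlinarith
      · nlinarith

theorem stmt4 (L : List ℝ) (hL : L ≠ []) (h2 : ∀ x ∈ L, 2 ≤ x) (a b c d : ℝ)
    (h : (L.map Mmat).prod = !![-a, -b; c, d]) :
    0 ≤ a ∧ a < min b c ∧ max b c < d ∧ c - a ≤ d - b := by
  obtain ⟨i1, i2, i3, i4, i5, i6⟩ := aux4 L hL h2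
  rw [h] at i1 i2 i3 i4 i5 i6
  simp [Matrix.cons_val_zero, Matrix.cons_val_one, Matrix.head_cons] at i1 i2 i3 i4 i5 i6
  exact ⟨i1, lt_min i2 i3, max_lt i4 i5, by linarith⟩
end

section
/- If α₁,…,α_l are real numbers with α_i ≥ 2 for all i and l ≥ 2, then det T(α₁,…,α_{l−1}) < det T(α₁,…,α_{l−1},α_l). -/
lemma Tmat_submatrix_succ {n : ℕ} (α : Fin (n+1) → ℝ) :
    (Tmat α).submatrix Fin.succ Fin.succ = Tmat (α ∘ Fin.succ) := by
  ext i j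
  simp [Tmat, Fin.val_succ]

lemma det_rec (n : ℕ) (α : Fin (n+2) → ℝ) :
    (Tmat α).det = α 0 * (Tmat (α ∘ Fin.succ)).det - (Tmat (α ∘ Fin.succ ∘ Fin.succ)).det := by
  rw [Matrix.det_succ_row_zero]
  rw [Fin.sum_univ_succ, Fin.sum_univ_succ]
  have h0 : ∀ j : Fin n, (Tmat α) 0 (Fin.succ (Fin.succ j)) = 0 := by
    intro j; simp [Tmat]
  simp only [h0, mul_zero, zero_mul, Finset.sum_const_zero, add_zero]
  have e00 : (Tmat α) 0 0 = α 0 := by simp [Tmat]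
  have e01 : (Tmat α) 0 (Fin.succ 0) = 1 := by simp [Tmat]
  rw [e00, e01]
  have hsub0 : ((Tmat α).submatrix Fin.succ (Fin.succAbove 0)) = Tmat (α ∘ Fin.succ) := by
    rw [Fin.succAbove_zero, Tmat_submatrix_succ]
  rw [hsub0]
  have key2 : ((Tmat α).submatrix Fin.succ (Fin.succAbove (Fin.succ 0))).det
      = (Tmat (α ∘ Fin.succ ∘ Fin.succ)).det := by
    set M := (Tmat α).submatrix Fin.succ (Fin.succAbove (Fin.succ 0)) with hM
    rw [Matrix.det_succ_column_zero, Fin.sum_univ_succ]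
    have hM0 : ∀ i : Fin n, M (Fin.succ i) 0 = 0 := by
      intro i
      simp [hM, Tmat, Fin.succAbove, Fin.lt_def]
    have hM00 : M 0 0 = 1 := by
      simp [hM, Tmat, Fin.succAbove, Fin.lt_def]
    simp only [hM0, mul_zero, zero_mul, Finset.sum_const_zero, add_zero, hM00]
    have : M.submatrix Fin.succ Fin.succ = Tmat (α ∘ Fin.succ ∘ Fin.succ) := by
      ext i j
      simp [hM, Tmat, Fin.succAbove, Fin.lt_def, Matrix.submatrix_apply]
    simp only [Fin.succAbove_zero] at this ⊢
    rw [this]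
    norm_num
  rw [key2]
  norm_num [Fin.val_succ]
  ring

lemma det_rev {n : ℕ} (α : Fin n → ℝ) : (Tmat (α ∘ Fin.rev)).det = (Tmat α).det := by
  have h : Tmat (α ∘ Fin.rev) = (Tmat α).submatrix (Fin.revPerm : Equiv.Perm (Fin n))
      (Fin.revPerm : Equiv.Perm (Fin n)) := by
    ext i j
    have hi := i.isLt
    have hj := j.isLt
    simp only [Tmat, Matrix.of_apply, Matrix.submatrix_apply, Fin.revPerm_apply,
      Function.comp_apply, Fin.val_rev]
    have h1 : (n - 1 - (i:ℕ) = n - 1 - (j:ℕ)) ↔ ((i:ℕ) = (j:ℕ)) := by omega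
    have h2 : ((n - 1 - (i:ℕ)) + 1 = n - 1 - (j:ℕ) ∨ (n - 1 - (j:ℕ)) + 1 = n - 1 - (i:ℕ))
        ↔ ((i:ℕ) + 1 = (j:ℕ) ∨ (j:ℕ) + 1 = (i:ℕ)) := by omega
    split_ifs <;> first | rfl | omega
  rw [h, Matrix.det_submatrix_equiv_self]

lemma key_s5 : ∀ (n : ℕ) (α : Fin (n+1) → ℝ), (∀ i, 2 ≤ α i) →
    1 ≤ (Tmat (α ∘ Fin.succ)).det ∧ (Tmat (α ∘ Fin.succ)).det + 1 ≤ (Tmat α).det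
  | 0, α, h => by
      constructor
      · simp [Matrix.det_fin_zero]
      · have := h 0
        simp [Matrix.det_fin_zero, Matrix.det_fin_one, Tmat]
        linarith
  | (n+1), α, h => by
      obtain ⟨ih1, ih2⟩ := key_s5 n (α ∘ Fin.succ) (fun i => h _)
      rw [Function.comp_assoc] at ih1 ih2
      rw [det_rec n α]
      have h0 := h 0
      constructor
      · linarith
      · nlinarith

theorem stmt5 (L : List ℝ) (hlen : 2 ≤ L.length) (h2 : ∀ x ∈ L, 2 ≤ x) :
    detT L.dropLast < detT L := by
  obtain ⟨n, hn⟩ : ∃ n, L.length = n + 2 := ⟨L.length - 2, by omega⟩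
  set f : Fin (n+2) → ℝ := fun i => L.get (Fin.cast hn.symm i) with hf
  have hf2 : ∀ i, 2 ≤ f i := fun i => h2 _ (by simp [hf])
  have hdL : detT L = (Tmat f).det := by
    unfold detT
    have h : Tmat L.get = (Tmat f).submatrix ⇑(finCongr hn) ⇑(finCongr hn) := by
      ext i j
      simp [Tmat, hf]
    rw [h, Matrix.det_submatrix_equiv_self]
  have hdl : L.dropLast.length = n + 1 := by
    simp [List.length_dropLast, hn]
  have hdD : detT L.dropLast = (Tmat (f ∘ Fin.castSucc)).det := by
    unfold detT
    have h : Tmat L.dropLast.get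
        = (Tmat (f ∘ Fin.castSucc)).submatrix ⇑(finCongr hdl) ⇑(finCongr hdl) := by
      ext i j
      simp [Tmat, hf, List.get_eq_getElem, List.getElem_dropLast]
    rw [h, Matrix.det_submatrix_equiv_self]
  obtain ⟨-, hkey⟩ := key_s5 (n+1) (f ∘ Fin.rev) (fun i => hf2 _)
  have e1 : (Tmat (f ∘ Fin.rev)).det = (Tmat f).det := det_rev f
  have e2 : (Tmat ((f ∘ Fin.rev) ∘ Fin.succ)).det = (Tmat (f ∘ Fin.castSucc)).det := by
    have h : (f ∘ Fin.rev) ∘ Fin.succ = (f ∘ Fin.castSucc) ∘ Fin.rev := by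
      funext i
      simp [Function.comp, Fin.rev_succ]
    rw [h, det_rev]
  rw [hdL, hdD]
  linarith
end

section
/- The subgroup of SL₂(ℤ) generated by the matrices M(2), M(3), M(4), … is all of SL₂(ℤ). -/
/-- The matrix `M(α) = !![0, -1; 1, α]` as an element of `SL₂(ℤ)`. -/
def Msl (a : ℤ) : Matrix.SpecialLinearGroup (Fin 2) ℤ :=
  ⟨!![0, -1; 1, a], by simp [Matrix.det_fin_two_of]⟩

open Matrix ModularGroup

local notation "SL2" => Matrix.SpecialLinearGroup (Fin 2) ℤ

lemma Msl_eq (a : ℤ) : Msl a = S * T ^ a := by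
  ext i j
  simp only [Msl, Matrix.SpecialLinearGroup.coe_mul, coe_S, coe_T_zpow]
  fin_cases i <;> fin_cases j <;> simp [Matrix.mul_apply, Fin.sum_univ_two]

lemma key_s11 (H : Subgroup SL2) (hS : S ∈ H) (hT : T ∈ H) :
    ∀ n : ℕ, ∀ A : SL2, (A.1 1 0).natAbs ≤ n → A ∈ H := by
  intro n
  induction n with
  | zero =>
    intro A hA
    have hc : A.1 1 0 = 0 := by omega
    have hdet := A.2
    rw [Matrix.det_fin_two, hc, mul_zero, sub_zero] at hdet
    rcases Int.eq_one_or_neg_one_of_mul_eq_one' hdet with ⟨h1, h2⟩ | ⟨h1, h2⟩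
    · have : A = T ^ (A.1 0 1) := by
        ext i j
        rw [coe_T_zpow]
        fin_cases i <;> fin_cases j <;> simp [h1, h2, hc]
      rw [this]; exact zpow_mem hT _
    · have : A = S * S * T ^ (-(A.1 0 1)) := by
        ext i j
        simp only [Matrix.SpecialLinearGroup.coe_mul, coe_S, coe_T_zpow]
        fin_cases i <;> fin_cases j <;>
          simp [h1, h2, hc, Matrix.mul_apply, Fin.sum_univ_two]
      rw [this]
      exact mul_mem (mul_mem hS hS) (zpow_mem hT _)
  | succ n ih =>
    intro A hA
    by_cases h : (A.1 1 0).natAbs ≤ n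
    · exact ih A h
    have hc : A.1 1 0 ≠ 0 := by omega
    set c := A.1 1 0 with hcdef
    set a := A.1 0 0 with hadef
    set q := a / c with hq
    have hr : (a % c).natAbs < c.natAbs := by
      have h1 := Int.emod_lt a hc
      have h2 := Int.emod_nonneg a hc
      omega
    set B := S * (T ^ (-q) * A) with hB
    have hB10 : B.1 1 0 = a % c := by
      simp only [hB, Matrix.SpecialLinearGroup.coe_mul, coe_S, coe_T_zpow]
      simp [Matrix.mul_apply, Fin.sum_univ_two, Matrix.vecMul, dotProduct]
      rw [Int.emod_def]; ring
    have hBH : B ∈ H := ih B (by rw [hB10]; omega)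
    have hAB : A = T ^ q * S⁻¹ * B := by rw [hB]; group
    rw [hAB]
    exact mul_mem (mul_mem (zpow_mem hT q) (inv_mem hS)) hBH

theorem stmt11 :
    Subgroup.closure {A : Matrix.SpecialLinearGroup (Fin 2) ℤ | ∃ a : ℤ, 2 ≤ a ∧ A = Msl a}
      = ⊤ := by
  set H := Subgroup.closure {A : Matrix.SpecialLinearGroup (Fin 2) ℤ | ∃ a : ℤ, 2 ≤ a ∧ A = Msl a} with hH
  have hM : ∀ a : ℤ, 2 ≤ a → Msl a ∈ H :=
    fun a ha => Subgroup.subset_closure ⟨a, ha, rfl⟩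
  have hT : T ∈ H := by
    have : T = (Msl 2)⁻¹ * Msl 3 := by
      rw [Msl_eq, Msl_eq]; group
    rw [this]
    exact mul_mem (inv_mem (hM 2 le_rfl)) (hM 3 (by norm_num))
  have hS : S ∈ H := by
    have : S = Msl 2 * (T ^ (2:ℤ))⁻¹ := by rw [Msl_eq]; group
    rw [this]
    exact mul_mem (hM 2 le_rfl) (inv_mem (zpow_mem hT 2))
  rw [eq_top_iff]
  intro A _
  exact key_s11 H hS hT (A.1 1 0).natAbs A le_rfl
end
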